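/- Let f(t) = t · (log(t+1))^δ with δ > 2 on [0, ∞). Then f satisfies the Keller–Osserman condition, i.e., f(0) = 0, f(t) > 0 for t > 0, f is non-decreasing, and ∫_1^∞ (∫_0^s f(t) dt)^{−1/2} ds < ∞. -/

import Mathlib

open Real MeasureTheory Set

theorem log_power_satisfies_keller_osserman (δ : ℝ) (hδ : 2 < δ) :
    let f : ℝ → ℝ := fun t => t * (Real.log (t + 1)) ^ δ
    f 0 = 0 ∧ (∀ t : ℝ, 0 < t → 0 < f t) ∧ (MonotoneOn f (Ici 0)) ∧
      IntegrableOn (fun s : ℝ => (∫ t in (0:ℝ)..s, f t) ^ (-(1/2 : ℝ))) (Ici 1) := by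
  intro f
  have hδ0 : (0:ℝ) ≤ δ := by linarith
  have hfpos : ∀ t : ℝ, 0 < t → 0 < f t := by
    intro t ht
    exact mul_pos ht (Real.rpow_pos_of_pos (Real.log_pos (by linarith)) δ)
  have hfnonneg : ∀ t : ℝ, 0 ≤ t → 0 ≤ f t := by
    intro t ht
    rcases ht.eq_or_lt with h | h
    · simp [f, ← h]
    · exact (hfpos t h).le
  have hmono : MonotoneOn f (Ici 0) := by
    intro a ha b hb hab
    have ha0 : (0:ℝ) ≤ a := ha
    have hb0 : (0:ℝ) ≤ b := hb
    have hla : 0 ≤ Real.log (a + 1) := Real.log_nonneg (by linarith)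
    have hlb : Real.log (a + 1) ≤ Real.log (b + 1) :=
      Real.log_le_log (by linarith) (by linarith)
    exact mul_le_mul hab (Real.rpow_le_rpow hla hlb hδ0)
      (Real.rpow_nonneg hla δ) hb0
  refine ⟨by simp [f], hfpos, hmono, ?_⟩
  -- continuity of f on `Ici 0`
  have hfc : ∀ t : ℝ, 0 ≤ t → ContinuousAt f t := by
    intro t ht
    have h1 : ContinuousAt (fun t : ℝ => Real.log (t + 1)) t :=
      (continuousAt_id.add continuousAt_const).log (by show t + 1 ≠ 0; exact ne_of_gt (by linarith))
    exact continuousAt_id.mul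
      ((Real.continuousAt_rpow_const _ _ (Or.inr hδ0)).comp h1)
  have hint : ∀ a b : ℝ, 0 ≤ a → IntervalIntegrable f volume a b ∨ True := fun _ _ _ => Or.inr trivial
  have hII : ∀ a b : ℝ, 0 ≤ a → 0 ≤ b → IntervalIntegrable f volume a b := by
    intro a b ha hb
    apply ContinuousOn.intervalIntegrable
    intro t ht
    have : 0 ≤ t := by
      rcases le_total a b with h | h
      · rw [uIcc_of_le h] at ht; exact le_trans ha ht.1
      · rw [uIcc_of_ge h] at ht; exact le_trans hb ht.1
    exact (hfc t this).continuousWithinAt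
  set F : ℝ → ℝ := fun s => ∫ t in (0:ℝ)..s, f t with hF
  -- lower bound for F
  have hFlb : ∀ s : ℝ, 1 ≤ s →
      (s/2) * ((s/2) * (Real.log (s + 1) / 2) ^ δ) ≤ F s := by
    intro s hs
    have hs0 : (0:ℝ) < s := by linarith
    have hsplit : F s = (∫ t in (0:ℝ)..(s/2), f t) + ∫ t in (s/2)..s, f t := by
      rw [hF]
      exact (intervalIntegral.integral_add_adjacent_intervals
        (hII 0 (s/2) le_rfl (by linarith)) (hII (s/2) s (by linarith) hs0.le)).symm
    have h1 : 0 ≤ ∫ t in (0:ℝ)..(s/2), f t :=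
      intervalIntegral.integral_nonneg (by linarith) (fun t ht => hfnonneg t ht.1)
    have h2 : (s - s/2) * f (s/2) ≤ ∫ t in (s/2)..s, f t := by
      have hle := intervalIntegral.integral_mono_on (g := f) (by linarith : s/2 ≤ s)
        (intervalIntegrable_const (c := f (s/2))) (hII (s/2) s (by linarith) hs0.le)
        (fun t ht => hmono (by simpa using (by linarith : (0:ℝ) ≤ s/2))
          (by simpa using (le_trans (by linarith) ht.1 : (0:ℝ) ≤ t)) ht.1)
      rwa [intervalIntegral.integral_const, smul_eq_mul] at hle
    have hlog : Real.log (s + 1) / 2 ≤ Real.log (s/2 + 1) := by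
      have h3 : Real.log (s + 1) ≤ Real.log ((s/2 + 1) ^ 2) := by
        apply Real.log_le_log (by linarith)
        nlinarith
      rw [Real.log_pow] at h3
      push_cast at h3
      linarith
    have hfs2 : (s/2) * (Real.log (s + 1) / 2) ^ δ ≤ f (s/2) := by
      have hl0 : 0 ≤ Real.log (s + 1) / 2 := by
        have := Real.log_nonneg (by linarith : (1:ℝ) ≤ s + 1)
        linarith
      exact mul_le_mul_of_nonneg_left (Real.rpow_le_rpow hl0 hlog hδ0) (by linarith)
    calc (s/2) * ((s/2) * (Real.log (s + 1) / 2) ^ δ)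
        ≤ (s/2) * f (s/2) := by
          apply mul_le_mul_of_nonneg_left hfs2 (by linarith)
      _ = (s - s/2) * f (s/2) := by ring_nf
      _ ≤ ∫ t in (s/2)..s, f t := h2
      _ ≤ F s := by rw [hsplit]; linarith
  have hFpos : ∀ s : ℝ, 1 ≤ s → 0 < F s := by
    intro s hs
    refine lt_of_lt_of_le ?_ (hFlb s hs)
    have hl : 0 < Real.log (s + 1) / 2 := by
      have := Real.log_pos (by linarith : (1:ℝ) < s + 1)
      linarith
    have h4 := Real.rpow_pos_of_pos hl δ
    exact mul_pos (by linarith) (mul_pos (by linarith) h4)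
  -- continuity / measurability of the integrand
  have hhc : ∀ s : ℝ, 1 ≤ s → ContinuousAt (fun s : ℝ => (F s) ^ (-(1/2 : ℝ))) s := by
    intro s hs
    have hFc : ContinuousAt F s := by
      have huicc : uIcc (0:ℝ) (s+1) = Icc 0 (s+1) := uIcc_of_le (by linarith)
      have hIO : IntegrableOn f (uIcc (0:ℝ) (s+1)) := by
        rw [huicc]
        exact (intervalIntegrable_iff_integrableOn_Icc_of_le (by linarith)).mp
          (hII 0 (s+1) le_rfl (by linarith))
      have hcont : ContinuousOn F (uIcc (0:ℝ) (s+1)) :=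
        intervalIntegral.continuousOn_primitive_interval hIO
      have hmem : uIcc (0:ℝ) (s+1) ∈ nhds s := by
        rw [huicc]
        exact Icc_mem_nhds (by linarith) (by linarith)
      have hsmem : s ∈ uIcc (0:ℝ) (s+1) := by
        rw [huicc]; exact ⟨by linarith, by linarith⟩
      exact (hcont s hsmem).continuousAt hmem
    exact hFc.rpow_const (Or.inl (hFpos s hs).ne')
  have hmeas : AEStronglyMeasurable (fun s : ℝ => (F s) ^ (-(1/2 : ℝ)))
      (volume.restrict (Ici (1:ℝ))) :=
    ContinuousOn.aestronglyMeasurable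
      (fun s hs => (hhc s hs).continuousWithinAt) measurableSet_Ici
  -- the comparison function and its integrability
  set p : ℝ := δ / 2 with hp
  have hp1 : 1 < p := by rw [hp]; linarith
  have hkey : IntegrableOn (fun s : ℝ => Real.log (s + 1) ^ (-p) / (s + 1)) (Ioi 1) := by
    have hderiv : ∀ x ∈ Ici (1:ℝ),
        HasDerivAt (fun s : ℝ => -(Real.log (s + 1) ^ (1 - p)) / (p - 1))
          (Real.log (x + 1) ^ (-p) / (x + 1)) x := by
      intro x hx
      have hx1 : (1:ℝ) ≤ x := hx
      have hlx : 0 < Real.log (x + 1) := Real.log_pos (by linarith)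
      have hlog : HasDerivAt (fun s : ℝ => Real.log (s + 1)) (1 / (x + 1)) x := by
        have h1 : HasDerivAt (fun s : ℝ => s + 1) 1 x := by
          simpa using (hasDerivAt_id x).add_const 1
        exact ((Real.hasDerivAt_log (by linarith : x + 1 ≠ 0)).comp x h1).congr_deriv (by simp : (x + 1)⁻¹ * 1 = 1 / (x + 1))
      have hr : HasDerivAt (fun y : ℝ => y ^ (1 - p))
          ((1 - p) * Real.log (x + 1) ^ (1 - p - 1)) (Real.log (x + 1)) :=
        Real.hasDerivAt_rpow_const (Or.inl hlx.ne')
      have := (hr.comp x hlog).neg.div_const (p - 1)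
      refine this.congr_deriv (Eq.symm ?_)
      have h2 : (1:ℝ) - p - 1 = -p := by ring
      have hne : p - 1 ≠ 0 := by
        have : (1:ℝ) < p := hp1
        linarith
      rw [h2, eq_div_iff hne]
      ring
    have hnonneg : ∀ x ∈ Ioi (1:ℝ), 0 ≤ Real.log (x + 1) ^ (-p) / (x + 1) := by
      intro x hx
      have hx1 : (1:ℝ) < x := hx
      have hlx : (0:ℝ) < Real.log (x + 1) := Real.log_pos (by linarith)
      exact div_nonneg (Real.rpow_nonneg hlx.le _) (by linarith)
    have htends : Filter.Tendsto (fun s : ℝ => -(Real.log (s + 1) ^ (1 - p)) / (p - 1))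
        Filter.atTop (nhds 0) := by
      have h1 : Filter.Tendsto (fun s : ℝ => Real.log (s + 1)) Filter.atTop Filter.atTop :=
        Real.tendsto_log_atTop.comp (Filter.tendsto_atTop_add_const_right _ 1 Filter.tendsto_id)
      have h2 : Filter.Tendsto (fun y : ℝ => y ^ (1 - p)) Filter.atTop (nhds 0) := by
        have := tendsto_rpow_neg_atTop (by linarith : (0:ℝ) < p - 1)
        simpa [neg_sub, sub_eq_neg_add] using this
      have h3 := (h2.comp h1).neg.div_const (p - 1)
      simpa using h3
    exact integrableOn_Ioi_deriv_of_nonneg' hderiv hnonneg htends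
  -- bound the integrand by a constant multiple of the comparison function
  rw [integrableOn_Ici_iff_integrableOn_Ioi]
  apply Integrable.mono ((hkey.const_mul (4 * (2:ℝ) ^ p)))
    (hmeas.mono_set Ioi_subset_Ici_self)
  filter_upwards [ae_restrict_mem measurableSet_Ioi] with s hs
  have hs1 : (1:ℝ) < s := hs
  set L : ℝ := Real.log (s + 1) with hL
  have hLpos : 0 < L := Real.log_pos (by linarith)
  have hFp := hFpos s hs1.le
  have hbound1 : (F s) ^ (-(1/2 : ℝ)) ≤
      ((s/2) * ((s/2) * (L / 2) ^ δ)) ^ (-(1/2 : ℝ)) := by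
    apply Real.rpow_le_rpow_of_nonpos ?_ (hFlb s hs1.le) (by norm_num)
    have h5 := Real.rpow_pos_of_pos (by linarith : (0:ℝ) < L / 2) δ
    exact mul_pos (by linarith) (mul_pos (by linarith) h5)
  have heq : ((s/2) * ((s/2) * (L / 2) ^ δ)) ^ (-(1/2 : ℝ))
      = (s/2)⁻¹ * ((L / 2) ^ δ) ^ (-(1/2 : ℝ)) := by
    have hs2 : (0:ℝ) < s / 2 := by linarith
    have hr : (0:ℝ) ≤ (L / 2) ^ δ := Real.rpow_nonneg (by linarith) δ
    rw [show (s/2) * ((s/2) * (L / 2) ^ δ) = (s/2) * (s/2) * (L / 2) ^ δ by ring,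
      Real.mul_rpow (by positivity) hr,
      show (s/2) * (s/2) = (s/2) ^ (2:ℕ) by ring,
      ← Real.rpow_natCast (s/2) 2, ← Real.rpow_mul hs2.le,
      show ((2:ℕ):ℝ) * (-(1/2):ℝ) = -1 by norm_num, Real.rpow_neg_one]
  have heq2 : ((L / 2) ^ δ) ^ (-(1/2 : ℝ)) = (2:ℝ) ^ p * L ^ (-p) := by
    rw [← Real.rpow_mul (by linarith : (0:ℝ) ≤ L / 2)]
    have : δ * (-(1/2 : ℝ)) = -p := by rw [hp]; ring
    rw [this, Real.div_rpow hLpos.le (by norm_num : (0:ℝ) ≤ 2),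
      div_eq_mul_inv, ← Real.rpow_neg (by norm_num : (0:ℝ) ≤ 2)]
    ring_nf
  have hnonneg' : 0 ≤ (F s) ^ (-(1/2 : ℝ)) := Real.rpow_nonneg hFp.le _
  rw [Real.norm_eq_abs, Real.norm_eq_abs, abs_of_nonneg hnonneg', abs_of_nonneg]
  · calc (F s) ^ (-(1/2 : ℝ))
        ≤ (s/2)⁻¹ * ((2:ℝ) ^ p * L ^ (-p)) := by
          rw [← heq2]; exact le_trans hbound1 (le_of_eq (by rw [heq]))
      _ ≤ 4 * (2:ℝ) ^ p * (L ^ (-p) / (s + 1)) := by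
          have hLp : 0 ≤ L ^ (-p) := Real.rpow_nonneg hLpos.le _
          have h2p : 0 < (2:ℝ) ^ p := Real.rpow_pos_of_pos (by norm_num) p
          have hsinv : (s/2)⁻¹ ≤ 4 / (s + 1) := by
            rw [show (s/2)⁻¹ = 2 / s by rw [inv_div],
              div_le_div_iff₀ (by linarith) (by linarith)]
            nlinarith
          calc (s/2)⁻¹ * ((2:ℝ) ^ p * L ^ (-p))
              ≤ (4 / (s+1)) * ((2:ℝ) ^ p * L ^ (-p)) := by
                apply mul_le_mul_of_nonneg_right hsinv (by positivity)
            _ = 4 * (2:ℝ) ^ p * (L ^ (-p) / (s + 1)) := by ring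
  · have hLp : 0 ≤ L ^ (-p) := Real.rpow_nonneg hLpos.le _
    positivity
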